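/- arXiv:1308.3063 — 2 statements merged into one kernel-verified Lean document; each statement's English description precedes it below -/
import Mathlib

section
/- If all bonding maps ε_{ij} of a direct system of topological spaces are topological embeddings, then each canonical map ε_i : X_i → X into the direct limit (with the final topology) is a topological embedding. -/
open Topology


/-- The relation defining the direct limit of a direct system. -/
def DirLimRel {X : ℕ → Type*} (ε : ∀ i j, i ≤ j → X i → X j) :
    (Σ i, X i) → (Σ i, X i) → Prop :=
  fun p q =>
    (∃ h : p.1 ≤ q.1, ε p.1 q.1 h p.2 = q.2) ∨
    (∃ h : q.1 ≤ p.1, ε q.1 p.1 h q.2 = p.2)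

/-- The direct limit of a direct system of sets. -/
def DirLim {X : ℕ → Type*} (ε : ∀ i j, i ≤ j → X i → X j) : Type _ :=
  Quot (DirLimRel ε)

/-- The canonical map `ε_i : X_i → X` into the direct limit. -/
def DirLim.ι {X : ℕ → Type*} (ε : ∀ i j, i ≤ j → X i → X j) (i : ℕ) (x : X i) :
    DirLim ε :=
  Quot.mk _ ⟨i, x⟩

/-- The final topology on the direct limit with respect to the canonical maps. -/
def dirLimTopology {X : ℕ → Type*} [∀ i, TopologicalSpace (X i)]
    (ε : ∀ i j, i ≤ j → X i → X j) : TopologicalSpace (DirLim ε) :=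
  ⨆ i, TopologicalSpace.coinduced (DirLim.ι ε i) inferInstance

section Aux

variable {X : ℕ → Type*}

/-- Exactness: two points are identified in the direct limit iff they agree at some
later stage. -/
theorem dirLim_ι_eq_iff (ε : ∀ i j, i ≤ j → X i → X j)
    (hid : ∀ i (x : X i), ε i i le_rfl x = x)
    (hcomp : ∀ i j k (hij : i ≤ j) (hjk : j ≤ k) (x : X i),
      ε j k hjk (ε i j hij x) = ε i k (hij.trans hjk) x)
    {i j : ℕ} {x : X i} {y : X j} :
    DirLim.ι ε i x = DirLim.ι ε j y ↔
      ∃ (m : ℕ) (hi : i ≤ m) (hj : j ≤ m), ε i m hi x = ε j m hj y := by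
  constructor
  · intro h
    have h' := Quot.eqvGen_exact h
    set R : (Σ i, X i) → (Σ i, X i) → Prop := fun p q =>
      ∃ (m : ℕ) (hp : p.1 ≤ m) (hq : q.1 ≤ m), ε p.1 m hp p.2 = ε q.1 m hq q.2 with hR
    suffices hsuff : ∀ p q, Relation.EqvGen (DirLimRel ε) p q → R p q by
      exact hsuff ⟨i, x⟩ ⟨j, y⟩ h'
    clear h h' x y i j
    intro p q h'
    induction h' with
    | rel p q hpq =>
        rcases hpq with ⟨hle, he⟩ | ⟨hle, he⟩
        · exact ⟨q.1, hle, le_rfl, by rw [he, hid]⟩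
        · exact ⟨p.1, le_rfl, hle, by rw [he, hid]⟩
    | refl p => exact ⟨p.1, le_rfl, le_rfl, rfl⟩
    | symm p q _ ih =>
        obtain ⟨m, hp, hq, he⟩ := ih
        exact ⟨m, hq, hp, he.symm⟩
    | trans p q r _ _ ih₁ ih₂ =>
        obtain ⟨m, hp, hq, he⟩ := ih₁
        obtain ⟨m', hq', hr, he'⟩ := ih₂
        refine ⟨max m m', hp.trans (le_max_left _ _), hr.trans (le_max_right _ _), ?_⟩
        calc ε p.1 (max m m') _ p.2
            = ε m (max m m') (le_max_left _ _) (ε p.1 m hp p.2) := (hcomp _ _ _ _ _ _).symm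
          _ = ε m (max m m') (le_max_left _ _) (ε q.1 m hq q.2) := by rw [he]
          _ = ε q.1 (max m m') (hq.trans (le_max_left _ _)) q.2 := hcomp _ _ _ _ _ _
          _ = ε m' (max m m') (le_max_right _ _) (ε q.1 m' hq' q.2) := (hcomp _ _ _ _ _ _).symm
          _ = ε m' (max m m') (le_max_right _ _) (ε r.1 m' hr r.2) := by rw [he']
          _ = ε r.1 (max m m') _ r.2 := hcomp _ _ _ _ _ _
  · rintro ⟨m, hi, hj, he⟩
    have h1 : DirLim.ι ε i x = DirLim.ι ε m (ε i m hi x) :=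
      Quot.sound (Or.inl ⟨hi, rfl⟩)
    have h2 : DirLim.ι ε j y = DirLim.ι ε m (ε j m hj y) :=
      Quot.sound (Or.inl ⟨hj, rfl⟩)
    rw [h1, h2, he]

variable [∀ i, TopologicalSpace (X i)]

/-- A sequence of open sets extending a given open set `U ⊆ X i` along the
direct system, compatible with preimages. -/
noncomputable def extSeq (ε : ∀ i j, i ≤ j → X i → X j)
    (hemb : ∀ i j (h : i ≤ j), Topology.IsEmbedding (ε i j h))
    (i : ℕ) (U : Set (X i)) (hU : IsOpen U) :
    (n : ℕ) → {s : Set (X (i + n)) // IsOpen s}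
  | 0 => ⟨U, hU⟩
  | n + 1 =>
    let prev := extSeq ε hemb i U hU n
    let H := (hemb (i + n) (i + n + 1) (Nat.le_succ _)).isInducing.isOpen_iff.mp prev.2
    ⟨Classical.choose H, (Classical.choose_spec H).1⟩

theorem extSeq_spec (ε : ∀ i j, i ≤ j → X i → X j)
    (hemb : ∀ i j (h : i ≤ j), Topology.IsEmbedding (ε i j h))
    (i : ℕ) (U : Set (X i)) (hU : IsOpen U) (n : ℕ) :
    ε (i + n) (i + n + 1) (Nat.le_succ _) ⁻¹' (extSeq ε hemb i U hU (n + 1)).1 =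
      (extSeq ε hemb i U hU n).1 :=
  (Classical.choose_spec ((hemb (i + n) (i + n + 1) (Nat.le_succ _)).isInducing.isOpen_iff.mp
    (extSeq ε hemb i U hU n).2)).2

theorem extSeq_mem_iff (ε : ∀ i j, i ≤ j → X i → X j)
    (hid : ∀ i (x : X i), ε i i le_rfl x = x)
    (hcomp : ∀ i j k (hij : i ≤ j) (hjk : j ≤ k) (x : X i),
      ε j k hjk (ε i j hij x) = ε i k (hij.trans hjk) x)
    (hemb : ∀ i j (h : i ≤ j), Topology.IsEmbedding (ε i j h))
    (i : ℕ) (U : Set (X i)) (hU : IsOpen U) (n : ℕ) :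
    ∀ n' (hn : n ≤ n') (h : i + n ≤ i + n') (x : X (i + n)),
      ε (i + n) (i + n') h x ∈ (extSeq ε hemb i U hU n').1 ↔
        x ∈ (extSeq ε hemb i U hU n).1 := by
  intro n' hn
  induction n' , hn using Nat.le_induction with
  | base =>
      intro h x
      have : ε (i + n) (i + n) h x = x := hid _ x
      rw [this]
  | succ n' hn ih =>
      intro h x
      have h1 : i + n ≤ i + n' := by omega
      have h2 : ε (i + n') (i + n' + 1) (Nat.le_succ _) (ε (i + n) (i + n') h1 x) =
          ε (i + n) (i + (n' + 1)) h x := hcomp _ _ _ _ _ _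
      rw [← h2, ← Set.mem_preimage, extSeq_spec ε hemb i U hU n']
      exact ih h1 x

end Aux

/-- If all bonding maps of a direct system of topological spaces are topological
embeddings, then each canonical map `ε_i : X_i → X` into the direct limit,
equipped with the final topology, is a topological embedding. -/
theorem dirLim_ι_embedding {X : ℕ → Type*} [∀ i, TopologicalSpace (X i)]
    (ε : ∀ i j, i ≤ j → X i → X j)
    (hid : ∀ i (x : X i), ε i i le_rfl x = x)
    (hcomp : ∀ i j k (hij : i ≤ j) (hjk : j ≤ k) (x : X i),
      ε j k hjk (ε i j hij x) = ε i k (hij.trans hjk) x)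
    (hemb : ∀ i j (h : i ≤ j), Topology.IsEmbedding (ε i j h)) :
    ∀ i, @Topology.IsEmbedding _ _ _ (dirLimTopology ε) (DirLim.ι ε i) := by
  intro i
  letI : TopologicalSpace (DirLim ε) := dirLimTopology ε
  have hcont : ∀ j, Continuous (DirLim.ι ε j) := fun j =>
    continuous_iff_coinduced_le.mpr (le_iSup (fun j => TopologicalSpace.coinduced
      (DirLim.ι ε j) inferInstance) j)
  constructor
  · -- inducing
    constructor
    refine le_antisymm (continuous_iff_le_induced.mp (hcont i)) ?_
    refine isOpen_implies_isOpen_iff.mp ?_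
    intro U hU
    rw [isOpen_induced_iff]
    -- construct the open set W in the direct limit
    set V := extSeq ε hemb i U hU with hV
    set W : Set (DirLim ε) := ⋃ n, DirLim.ι ε (i + n) '' (V n).1 with hW
    have key : ∀ j, DirLim.ι ε j ⁻¹' W =
        ⋃ n, ⋃ (_ : j ≤ i + n), ε j (i + n) ‹_› ⁻¹' (V n).1 := by
      intro j
      ext x
      simp only [Set.mem_preimage, Set.mem_iUnion, Set.mem_image, hW]
      constructor
      · rintro ⟨n, y, hy, hxy⟩
        obtain ⟨m, h1, h2, he⟩ := (dirLim_ι_eq_iff ε hid hcomp).mp hxy.symm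
        obtain ⟨d, rfl⟩ : ∃ d, m = i + d := ⟨m - i, by omega⟩
        have hnd : n ≤ d := by omega
        refine ⟨d, h1, ?_⟩
        have := (extSeq_mem_iff ε hid hcomp hemb i U hU n d hnd h2 y).mpr hy
        show ε j (i + d) h1 x ∈ (V d).1
        rw [he]
        exact this
      · rintro ⟨n, hjn, hx⟩
        exact ⟨n, ε j (i + n) hjn x, hx,
          (dirLim_ι_eq_iff ε hid hcomp).mpr ⟨i + n, le_rfl, hjn, hid _ _⟩⟩
    have hWopen : IsOpen W := by
      show IsOpen[⨆ j, TopologicalSpace.coinduced (DirLim.ι ε j) inferInstance] W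
      rw [isOpen_iSup_iff]
      intro j
      rw [isOpen_coinduced, key j]
      exact isOpen_iUnion fun n => isOpen_iUnion fun h =>
        (hemb j (i + n) h).continuous.isOpen_preimage _ (V n).2
    refine ⟨W, hWopen, ?_⟩
    rw [key i]
    ext x
    simp only [Set.mem_iUnion, Set.mem_preimage]
    constructor
    · rintro ⟨n, hin, hx⟩
      exact (extSeq_mem_iff ε hid hcomp hemb i U hU 0 n (Nat.zero_le _) hin x).mp hx
    · intro hx
      exact ⟨0, le_rfl, by simpa [hid] using (show x ∈ (V 0).1 from hx)⟩
  · -- injective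
    intro x y hxy
    obtain ⟨m, h1, h2, he⟩ := (dirLim_ι_eq_iff ε hid hcomp).mp hxy
    exact (hemb i m h1).injective he
end

section
/- The direct limit (as a set) of the tangent bundles TM_i is in bijection with the tangent bundle of the direct limit manifold M = colim M_i: every equivalence class of curves [f,x] in TM arises from some TM_i, and conversely. -/
open scoped Manifold

section

variable (E : ℕ → Type*) [∀ i, NormedAddCommGroup (E i)] [∀ i, NormedSpace ℝ (E i)]
  (M : ℕ → Type*) [∀ i, TopologicalSpace (M i)] [∀ i, ChartedSpace (E i) (M i)]
  [∀ i, IsManifold (𝓘(ℝ, E i)) ((⊤ : ℕ∞) : WithTop ℕ∞) (M i)]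
  (φ : ∀ i j, i ≤ j → M i → M j)

/-- The set direct limit `M = colim M_i`. -/
def DLM : Type _ := Quot (DirLimRel φ)

/-- The canonical maps `M_i → M`. -/
def DLM.ι (i : ℕ) (x : M i) : DLM M φ := Quot.mk _ ⟨i, x⟩

/-- A curve in `M = colim M_i` is smooth if it factors through some `M_i` via a
smooth curve. -/
def SmoothCurveDLM (c : ℝ → DLM M φ) : Prop :=
  ∃ (i : ℕ) (g : ℝ → M i), ContMDiff 𝓘(ℝ, ℝ) (𝓘(ℝ, E i)) (⊤ : ℕ∞) g ∧
    c = fun t => DLM.ι M φ i (g t)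

/-- Two smooth curves in `M` are tangentially equivalent if they factor through
a common `M_i` via smooth curves with the same value and velocity at `0`. -/
def KinRel (c c' : {c : ℝ → DLM M φ // SmoothCurveDLM E M φ c}) : Prop :=
  ∃ (i : ℕ) (g g' : ℝ → M i), ContMDiff 𝓘(ℝ, ℝ) (𝓘(ℝ, E i)) (⊤ : ℕ∞) g ∧
    ContMDiff 𝓘(ℝ, ℝ) (𝓘(ℝ, E i)) (⊤ : ℕ∞) g' ∧
    c.1 = (fun t => DLM.ι M φ i (g t)) ∧ c'.1 = (fun t => DLM.ι M φ i (g' t)) ∧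
    g 0 = g' 0 ∧
    mfderiv 𝓘(ℝ, ℝ) (𝓘(ℝ, E i)) g 0 (1 : ℝ) =
      mfderiv 𝓘(ℝ, ℝ) (𝓘(ℝ, E i)) g' 0 (1 : ℝ)

/-- The kinematic tangent bundle of `M = colim M_i`: equivalence classes of
smooth curves in `M`. -/
def KTM : Type _ := Quot (KinRel E M φ)

end

open Metric Set in
/-- Any tangent vector is the velocity of a globally-defined smooth curve. -/
theorem exists_curve {EE : Type*} [NormedAddCommGroup EE] [NormedSpace ℝ EE]
    {MM : Type*} [TopologicalSpace MM] [ChartedSpace EE MM]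
    [IsManifold 𝓘(ℝ, EE) ((⊤ : ℕ∞) : WithTop ℕ∞) MM]
    (x : MM) (ξ : TangentSpace 𝓘(ℝ, EE) x) :
    ∃ g : ℝ → MM, ContMDiff 𝓘(ℝ, ℝ) 𝓘(ℝ, EE) (⊤ : ℕ∞) g ∧ g 0 = x ∧
      mfderiv 𝓘(ℝ, ℝ) 𝓘(ℝ, EE) g 0 (1 : ℝ) = ξ := by
  set e := extChartAt 𝓘(ℝ, EE) x with he
  have hopen : IsOpen e.target := isOpen_extChartAt_target x
  have hx0 : e x ∈ e.target := e.map_source (mem_extChartAt_source x)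
  obtain ⟨ε, hε, hball⟩ := Metric.isOpen_iff.1 hopen _ hx0
  set v : EE := mfderiv 𝓘(ℝ, EE) 𝓘(ℝ, EE) (↑e) x ξ with hv
  set K : ℝ := ‖v‖ / ε + 1 with hK
  have hKpos : 0 < K := by positivity
  set h : ℝ → ℝ := fun t => t * Real.exp (-(K * t) ^ 2) with hh
  set u : ℝ → EE := fun t => h t • v + e x with hu
  have hbound : ∀ t, u t ∈ e.target := by
    intro t
    apply hball
    simp only [hu, mem_ball, dist_eq_norm, add_sub_cancel_right, norm_smul, Real.norm_eq_abs]
    have h1 : (K * t) ^ 2 + 1 ≤ Real.exp ((K * t) ^ 2) := by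
      have := Real.add_one_le_exp ((K * t) ^ 2); linarith
    have h2 : Real.exp (-(K * t) ^ 2) = (Real.exp ((K * t) ^ 2))⁻¹ := by
      rw [Real.exp_neg]
    have hexppos : (0:ℝ) < Real.exp ((K * t) ^ 2) := Real.exp_pos _
    have h3 : |h t| ≤ 1 / (2 * K) := by
      have habs : |h t| = |t| * Real.exp (-(K * t) ^ 2) := by
        rw [hh]; simp [abs_mul, abs_of_pos (Real.exp_pos _)]
      rw [habs, h2]
      rw [div_eq_mul_inv, ← div_eq_mul_inv, ← div_eq_mul_inv,
        div_le_div_iff₀ hexppos (by positivity)]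
      have hsq : (K * |t|) ^ 2 = (K * t) ^ 2 := by rw [mul_pow, mul_pow, sq_abs]
      nlinarith [sq_nonneg (K * |t| - 1), hsq, abs_nonneg t, hKpos]
    have h4 : ‖v‖ / ε < K := by rw [hK]; linarith
    have h5 : ‖v‖ < K * ε := by
      rw [div_lt_iff₀ hε] at h4; linarith
    calc |h t| * ‖v‖ ≤ (1 / (2 * K)) * ‖v‖ := by
          apply mul_le_mul_of_nonneg_right h3 (norm_nonneg v)
      _ < ε := by
          rw [div_mul_eq_mul_div, one_mul, div_lt_iff₀ (by positivity)]
          nlinarith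
  have hucd : ContDiff ℝ ((⊤ : ℕ∞) : WithTop ℕ∞) u := by
    apply ContDiff.add _ contDiff_const
    apply ContDiff.smul _ contDiff_const
    apply ContDiff.mul contDiff_id
    exact Real.contDiff_exp.comp (((contDiff_const.mul contDiff_id).pow 2).neg)
  have hud : HasDerivAt u v 0 := by
    have hq : HasDerivAt (fun t : ℝ => -(K * t) ^ 2) 0 0 := by
      have : HasDerivAt (fun t : ℝ => K * t) K 0 := by
        simpa using (hasDerivAt_id (0:ℝ)).const_mul K
      simpa [Pi.neg_def, Pi.pow_def] using (this.pow 2).neg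
    have hexp : HasDerivAt (fun t : ℝ => Real.exp (-(K * t) ^ 2)) 0 0 := by
      simpa using hq.exp
    have hht : HasDerivAt h 1 0 := by
      have := (hasDerivAt_id (0:ℝ)).mul hexp
      simpa [Pi.mul_def] using this
    have : HasDerivAt (fun t => h t • v) ((1:ℝ) • v) 0 := hht.smul_const v
    simpa [hu] using this.add_const (e x)
  refine ⟨fun t => e.symm (u t), ?_, ?_, ?_⟩
  · intro t
    have h1 : ContMDiffAt 𝓘(ℝ, EE) 𝓘(ℝ, EE) (⊤ : ℕ∞) (e.symm) (u t) :=
      (contMDiffOn_extChartAt_symm x).contMDiffAt (hopen.mem_nhds (hbound t))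
    exact h1.comp t (hucd.contMDiff.contMDiffAt)
  · show e.symm (u 0) = x
    have : u 0 = e x := by simp [hu, hh]
    rw [this]
    exact extChartAt_to_inv x
  · have hrange : range (𝓘(ℝ, EE) : EE → EE) = univ := by simp
    have hmsymm : MDifferentiableAt 𝓘(ℝ, EE) 𝓘(ℝ, EE) e.symm (u 0) := by
      have := mdifferentiableWithinAt_extChartAt_symm (I := 𝓘(ℝ, EE)) (x := x) (hbound 0)
      rw [hrange, mdifferentiableWithinAt_univ] at this
      have hu0 : u 0 = e x := by simp [hu, hh]
      rwa [hu0] at this ⊢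
    have hcomp : mfderiv 𝓘(ℝ, ℝ) 𝓘(ℝ, EE) (fun t => e.symm (u t)) 0 =
        (mfderiv 𝓘(ℝ, EE) 𝓘(ℝ, EE) e.symm (u 0)).comp
          (mfderiv 𝓘(ℝ, ℝ) 𝓘(ℝ, EE) u 0) := by
      exact mfderiv_comp 0 hmsymm (hucd.contMDiff.mdifferentiableAt (by simp))
    rw [hcomp]
    have hu0 : u 0 = e x := by simp [hu, hh]
    have hmu : mfderiv 𝓘(ℝ, ℝ) 𝓘(ℝ, EE) u 0 (1:ℝ) = v := by
      rw [mfderiv_eq_fderiv, hud.hasFDerivAt.fderiv]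
      show (1:ℝ) • v = v
      exact one_smul ℝ v
    change (mfderiv 𝓘(ℝ, EE) 𝓘(ℝ, EE) e.symm (u 0)) (mfderiv 𝓘(ℝ, ℝ) 𝓘(ℝ, EE) u 0 (1:ℝ)) = ξ
    rw [hmu, hu0, hv]
    have hkey := mfderivWithin_extChartAt_symm_comp_mfderiv_extChartAt'
      (I := 𝓘(ℝ, EE)) (x := x) (mem_extChartAt_source (I := 𝓘(ℝ, EE)) x)
    rw [hrange, mfderivWithin_univ] at hkey
    have h6 := congrFun (congrArg
      (fun (f : TangentSpace 𝓘(ℝ,EE) x →L[ℝ] TangentSpace 𝓘(ℝ,EE) x) =>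
        (f : TangentSpace 𝓘(ℝ,EE) x → TangentSpace 𝓘(ℝ,EE) x)) hkey) ξ
    simp only [ContinuousLinearMap.coe_comp', Function.comp_apply,
      ContinuousLinearMap.coe_id', id_eq] at h6
    exact h6

/-- Equality of points of the tangent bundle from equality of base points and
(heterogeneous) equality of vectors. -/
theorem tb_mk_eq {EE : Type*} [NormedAddCommGroup EE] [NormedSpace ℝ EE]
    {MM : Type*} [TopologicalSpace MM] [ChartedSpace EE MM]
    {x y : MM} (h : x = y) (v : TangentSpace 𝓘(ℝ, EE) x) (w : TangentSpace 𝓘(ℝ, EE) y)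
    (h' : HEq v w) :
    (⟨x, v⟩ : TangentBundle 𝓘(ℝ, EE) MM) = ⟨y, w⟩ := by
  subst h
  rw [eq_of_heq h']

/-- Exactness for direct limits: equal classes are eventually equal. -/
theorem dirLim_exact {X : ℕ → Type*} {ε : ∀ i j, i ≤ j → X i → X j}
    (hid : ∀ i, ε i i le_rfl = id)
    (hcomp : ∀ i j k (hij : i ≤ j) (hjk : j ≤ k),
      (ε j k hjk) ∘ (ε i j hij) = ε i k (hij.trans hjk))
    {p q : Σ i, X i} (h : Quot.mk (DirLimRel ε) p = Quot.mk (DirLimRel ε) q) :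
    ∃ l, ∃ (hp : p.1 ≤ l) (hq : q.1 ≤ l), ε p.1 l hp p.2 = ε q.1 l hq q.2 := by
  have H := Quot.eqvGen_exact h
  clear h
  induction H with
  | rel a b hab =>
    rcases hab with ⟨hle, heq⟩ | ⟨hle, heq⟩
    · exact ⟨b.1, hle, le_rfl, by rw [heq, hid]; rfl⟩
    · exact ⟨a.1, le_rfl, hle, by rw [heq, hid]; rfl⟩
  | refl a => exact ⟨a.1, le_rfl, le_rfl, rfl⟩
  | symm a b _ ih =>
    obtain ⟨l, h1, h2, hl⟩ := ih
    exact ⟨l, h2, h1, hl.symm⟩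
  | trans a b c _ _ ih1 ih2 =>
    obtain ⟨l1, ha, hb, h1⟩ := ih1
    obtain ⟨l2, hb2, hc, h2⟩ := ih2
    refine ⟨max l1 l2, ha.trans (le_max_left _ _), hc.trans (le_max_right _ _), ?_⟩
    have e1 := congrFun (hcomp a.1 l1 (max l1 l2) ha (le_max_left _ _)) a.2
    have e2 := congrFun (hcomp b.1 l1 (max l1 l2) hb (le_max_left _ _)) b.2
    have e3 := congrFun (hcomp b.1 l2 (max l1 l2) hb2 (le_max_right _ _)) b.2
    have e4 := congrFun (hcomp c.1 l2 (max l1 l2) hc (le_max_right _ _)) c.2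
    simp only [Function.comp_apply] at e1 e2 e3 e4
    rw [← e1, ← e4, h1, ← h2, e2, e3]

/-- Exactness at any common stage, using injectivity of the bonding maps. -/
theorem dirLim_exact' {X : ℕ → Type*} {ε : ∀ i j, i ≤ j → X i → X j}
    (hid : ∀ i, ε i i le_rfl = id)
    (hcomp : ∀ i j k (hij : i ≤ j) (hjk : j ≤ k),
      (ε j k hjk) ∘ (ε i j hij) = ε i k (hij.trans hjk))
    (hinj : ∀ i j (h : i ≤ j), Function.Injective (ε i j h))
    {p q : Σ i, X i} (h : Quot.mk (DirLimRel ε) p = Quot.mk (DirLimRel ε) q)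
    (l : ℕ) (hp : p.1 ≤ l) (hq : q.1 ≤ l) :
    ε p.1 l hp p.2 = ε q.1 l hq q.2 := by
  obtain ⟨m, hp', hq', hm⟩ := dirLim_exact hid hcomp h
  set n := max m l with hn
  apply hinj l n (le_max_right m l)
  have e1 := congrFun (hcomp p.1 l n hp (le_max_right m l)) p.2
  have e2 := congrFun (hcomp q.1 l n hq (le_max_right m l)) q.2
  have e3 := congrFun (hcomp p.1 m n hp' (le_max_left m l)) p.2
  have e4 := congrFun (hcomp q.1 m n hq' (le_max_left m l)) q.2
  simp only [Function.comp_apply] at e1 e2 e3 e4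
  rw [e1, e2, ← e3, ← e4, hm]
/-- For a direct sequence of paracompact finite-dimensional manifolds with
closed embeddings as bonding maps, the set direct limit of the tangent bundles
`TM_i` is in bijection with the kinematic tangent bundle of the direct limit
manifold `M = colim M_i`: every class of curves in `TM` comes from some `TM_i`
and conversely.  The bijection sends the image in `colim TM_i` of the velocity
vector of a smooth curve `g` in `M_i` to the class of the curve `g` viewed in
`M`. -/
theorem colim_tangent_bundles_bijective_tangent_colim
    (E : ℕ → Type*) [∀ i, NormedAddCommGroup (E i)] [∀ i, NormedSpace ℝ (E i)]
    [∀ i, FiniteDimensional ℝ (E i)]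
    (M : ℕ → Type*) [∀ i, TopologicalSpace (M i)] [∀ i, ChartedSpace (E i) (M i)]
    [∀ i, IsManifold (𝓘(ℝ, E i)) ((⊤ : ℕ∞) : WithTop ℕ∞) (M i)]
    [∀ i, ParacompactSpace (M i)]
    (φ : ∀ i j, i ≤ j → M i → M j)
    (hsmooth : ∀ i j (h : i ≤ j), ContMDiff (𝓘(ℝ, E i)) (𝓘(ℝ, E j)) (⊤ : ℕ∞) (φ i j h))
    (hclosed : ∀ i j (h : i ≤ j), Topology.IsClosedEmbedding (φ i j h))
    (himm : ∀ i j (h : i ≤ j) (x : M i),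
      Function.Injective (mfderiv (𝓘(ℝ, E i)) (𝓘(ℝ, E j)) (φ i j h) x))
    (hid : ∀ i, φ i i le_rfl = id)
    (hcomp : ∀ i j k (hij : i ≤ j) (hjk : j ≤ k),
      (φ j k hjk) ∘ (φ i j hij) = φ i k (hij.trans hjk)) :
    ∃ Θ : Quot (DirLimRel (X := fun i => TangentBundle (𝓘(ℝ, E i)) (M i))
        (fun i j h => tangentMap (𝓘(ℝ, E i)) (𝓘(ℝ, E j)) (φ i j h))) ≃ KTM E M φ,
      ∀ (i : ℕ) (g : ℝ → M i) (hg : ContMDiff 𝓘(ℝ, ℝ) (𝓘(ℝ, E i)) (⊤ : ℕ∞) g),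
        Θ (Quot.mk _ ⟨i, ⟨g 0, mfderiv 𝓘(ℝ, ℝ) (𝓘(ℝ, E i)) g 0 (1 : ℝ)⟩⟩) =
          Quot.mk _ ⟨fun t => DLM.ι M φ i (g t), ⟨i, g, hg, rfl⟩⟩ := by
  classical
  set τ : ∀ i j, i ≤ j → TangentBundle (𝓘(ℝ, E i)) (M i) → TangentBundle (𝓘(ℝ, E j)) (M j) :=
    fun i j h => tangentMap (𝓘(ℝ, E i)) (𝓘(ℝ, E j)) (φ i j h) with hτ
  have hφinj : ∀ i j (h : i ≤ j), Function.Injective (φ i j h) :=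
    fun i j h => (hclosed i j h).injective
  -- pointwise comparison of two factorizations of the same curve
  have hpt : ∀ i j (g : ℝ → M i) (g' : ℝ → M j),
      ((fun t => DLM.ι M φ i (g t)) = fun t => DLM.ι M φ j (g' t)) →
      ∀ t, φ i (max i j) (le_max_left i j) (g t) = φ j (max i j) (le_max_right i j) (g' t) := by
    intro i j g g' hfun t
    have h := congrFun hfun t
    exact dirLim_exact' hid hcomp hφinj h (max i j) (le_max_left i j) (le_max_right i j)
  -- chain rule for tangentMap along a curve
  have tmap : ∀ i j (hij : i ≤ j) (g : ℝ → M i),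
      ContMDiff 𝓘(ℝ, ℝ) (𝓘(ℝ, E i)) (⊤ : ℕ∞) g →
      τ i j hij ⟨g 0, mfderiv 𝓘(ℝ, ℝ) (𝓘(ℝ, E i)) g 0 (1 : ℝ)⟩ =
        ⟨(fun t => φ i j hij (g t)) 0,
          mfderiv 𝓘(ℝ, ℝ) (𝓘(ℝ, E j)) (fun t => φ i j hij (g t)) 0 (1 : ℝ)⟩ := by
    intro i j hij g hg
    have hcr : mfderiv 𝓘(ℝ, ℝ) (𝓘(ℝ, E j)) (fun t => φ i j hij (g t)) 0 =
        (mfderiv (𝓘(ℝ, E i)) (𝓘(ℝ, E j)) (φ i j hij) (g 0)).comp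
          (mfderiv 𝓘(ℝ, ℝ) (𝓘(ℝ, E i)) g 0) :=
      mfderiv_comp 0 ((hsmooth i j hij).mdifferentiableAt (by simp))
        (hg.mdifferentiableAt (by simp))
    show (⟨φ i j hij (g 0), _⟩ : TangentBundle (𝓘(ℝ, E j)) (M j)) = _
    refine tb_mk_eq rfl _ _ (heq_of_eq ?_)
    rw [hcr]
    rfl
  -- smoothness of pushed curves
  have hpush : ∀ i j (hij : i ≤ j) (g : ℝ → M i), ContMDiff 𝓘(ℝ, ℝ) (𝓘(ℝ, E i)) (⊤ : ℕ∞) g →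
      ContMDiff 𝓘(ℝ, ℝ) (𝓘(ℝ, E j)) (⊤ : ℕ∞) (fun t => φ i j hij (g t)) :=
    fun i j hij g hg => (hsmooth i j hij).comp hg
  -- the velocity class in the colimit is independent of the factorization
  have tangent_wd : ∀ i j (g : ℝ → M i) (g' : ℝ → M j)
      (hg : ContMDiff 𝓘(ℝ, ℝ) (𝓘(ℝ, E i)) (⊤ : ℕ∞) g) (hg' : ContMDiff 𝓘(ℝ, ℝ) (𝓘(ℝ, E j)) (⊤ : ℕ∞) g'),
      ((fun t => DLM.ι M φ i (g t)) = fun t => DLM.ι M φ j (g' t)) →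
      Quot.mk (DirLimRel τ) ⟨i, ⟨g 0, mfderiv 𝓘(ℝ, ℝ) (𝓘(ℝ, E i)) g 0 (1 : ℝ)⟩⟩ =
        Quot.mk (DirLimRel τ) ⟨j, ⟨g' 0, mfderiv 𝓘(ℝ, ℝ) (𝓘(ℝ, E j)) g' 0 (1 : ℝ)⟩⟩ := by
    intro i j g g' hg hg' hfun
    have e1 : Quot.mk (DirLimRel τ) (⟨i, ⟨g 0, mfderiv 𝓘(ℝ, ℝ) (𝓘(ℝ, E i)) g 0 (1 : ℝ)⟩⟩ :
          Σ k, TangentBundle (𝓘(ℝ, E k)) (M k)) =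
        Quot.mk (DirLimRel τ)
          ⟨max i j, τ i (max i j) (le_max_left i j) ⟨g 0, mfderiv 𝓘(ℝ, ℝ) (𝓘(ℝ, E i)) g 0 (1 : ℝ)⟩⟩ :=
      Quot.sound (Or.inl ⟨le_max_left i j, rfl⟩)
    have e2 : Quot.mk (DirLimRel τ) (⟨j, ⟨g' 0, mfderiv 𝓘(ℝ, ℝ) (𝓘(ℝ, E j)) g' 0 (1 : ℝ)⟩⟩ :
          Σ k, TangentBundle (𝓘(ℝ, E k)) (M k)) =
        Quot.mk (DirLimRel τ)
          ⟨max i j, τ j (max i j) (le_max_right i j) ⟨g' 0, mfderiv 𝓘(ℝ, ℝ) (𝓘(ℝ, E j)) g' 0 (1 : ℝ)⟩⟩ :=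
      Quot.sound (Or.inl ⟨le_max_right i j, rfl⟩)
    rw [e1, e2, tmap i (max i j) (le_max_left i j) g hg,
      tmap j (max i j) (le_max_right i j) g' hg']
    have heqfun : (fun t => φ i (max i j) (le_max_left i j) (g t)) =
        fun t => φ j (max i j) (le_max_right i j) (g' t) := funext (hpt i j g g' hfun)
    rw [heqfun]
    rfl
  -- choose a curve for each tangent vector
  have hex : ∀ i (p : TangentBundle (𝓘(ℝ, E i)) (M i)),
      ∃ g : ℝ → M i, ContMDiff 𝓘(ℝ, ℝ) (𝓘(ℝ, E i)) (⊤ : ℕ∞) g ∧ g 0 = p.proj ∧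
        mfderiv 𝓘(ℝ, ℝ) (𝓘(ℝ, E i)) g 0 (1 : ℝ) = p.snd :=
    fun i p => exists_curve p.proj p.snd
  choose cv hcv1 hcv2 hcv3 using hex
  -- the forward map on representatives
  set F₀ : (Σ i, TangentBundle (𝓘(ℝ, E i)) (M i)) → KTM E M φ :=
    fun p => Quot.mk (KinRel E M φ)
      ⟨fun t => DLM.ι M φ p.1 (cv p.1 p.2 t), ⟨p.1, cv p.1 p.2, hcv1 p.1 p.2, rfl⟩⟩ with hF₀
  -- classes of curves with the same value and velocity coincide
  have lemB : ∀ i (g g' : ℝ → M i) (hg : ContMDiff 𝓘(ℝ, ℝ) (𝓘(ℝ, E i)) (⊤ : ℕ∞) g)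
      (hg' : ContMDiff 𝓘(ℝ, ℝ) (𝓘(ℝ, E i)) (⊤ : ℕ∞) g') (h0 : g 0 = g' 0)
      (h1 : mfderiv 𝓘(ℝ, ℝ) (𝓘(ℝ, E i)) g 0 (1 : ℝ) = mfderiv 𝓘(ℝ, ℝ) (𝓘(ℝ, E i)) g' 0 (1 : ℝ))
      (prf : SmoothCurveDLM E M φ (fun t => DLM.ι M φ i (g t)))
      (prf' : SmoothCurveDLM E M φ (fun t => DLM.ι M φ i (g' t))),
      Quot.mk (KinRel E M φ) ⟨fun t => DLM.ι M φ i (g t), prf⟩ =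
        Quot.mk (KinRel E M φ) ⟨fun t => DLM.ι M φ i (g' t), prf'⟩ :=
    fun i g g' hg hg' h0 h1 prf prf' =>
      Quot.sound ⟨i, g, g', hg, hg', rfl, rfl, h0, h1⟩
  -- pushing a vector up does not change its image class
  have key : ∀ i j (hij : i ≤ j) (vp : TangentBundle (𝓘(ℝ, E i)) (M i)),
      F₀ ⟨i, vp⟩ = F₀ ⟨j, τ i j hij vp⟩ := by
    intro i j hij vp
    set g : ℝ → M i := cv i vp with hg
    have hvp : vp = (⟨g 0, mfderiv 𝓘(ℝ, ℝ) (𝓘(ℝ, E i)) g 0 (1 : ℝ)⟩ :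
        TangentBundle (𝓘(ℝ, E i)) (M i)) :=
      tb_mk_eq (hcv2 i vp).symm vp.snd _ (heq_of_eq (hcv3 i vp).symm)
    have hτv : τ i j hij vp = ⟨(fun t => φ i j hij (g t)) 0,
        mfderiv 𝓘(ℝ, ℝ) (𝓘(ℝ, E j)) (fun t => φ i j hij (g t)) 0 (1 : ℝ)⟩ := by
      rw [hvp]; exact tmap i j hij g (hcv1 i vp)
    -- LHS equals the class of the pushed curve
    have hL : F₀ ⟨i, vp⟩ = Quot.mk (KinRel E M φ)
        ⟨fun t => DLM.ι M φ j (φ i j hij (g t)),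
          ⟨j, fun t => φ i j hij (g t), hpush i j hij g (hcv1 i vp), rfl⟩⟩ := by
      apply congrArg (Quot.mk (KinRel E M φ))
      apply Subtype.ext
      funext t
      exact Quot.sound (Or.inl ⟨hij, rfl⟩)
    have hR : F₀ ⟨j, τ i j hij vp⟩ = Quot.mk (KinRel E M φ)
        ⟨fun t => DLM.ι M φ j (cv j (τ i j hij vp) t),
          ⟨j, cv j (τ i j hij vp), hcv1 j _, rfl⟩⟩ := rfl
    rw [hL, hR]
    refine lemB j (fun t => φ i j hij (g t)) (cv j (τ i j hij vp))
      (hpush i j hij g (hcv1 i vp)) (hcv1 j _) ?_ ?_ _ _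
    · rw [hcv2 j _, hτv]
    · rw [hcv3 j _, hτv]
  have Fsound : ∀ p q, DirLimRel τ p q → F₀ p = F₀ q := by
    rintro ⟨i, vp⟩ ⟨j, vq⟩ (⟨hij, heq⟩ | ⟨hji, heq⟩)
    · dsimp only at hij heq
      rw [← heq]
      exact key i j hij vp
    · dsimp only at hji heq
      rw [← heq]
      exact (key j i hji vq).symm
  -- the backward map on representatives
  have hsel : ∀ c : {c : ℝ → DLM M φ // SmoothCurveDLM E M φ c},
      ∃ (i : ℕ) (g : ℝ → M i), ContMDiff 𝓘(ℝ, ℝ) (𝓘(ℝ, E i)) (⊤ : ℕ∞) g ∧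
        c.1 = fun t => DLM.ι M φ i (g t) := fun c => c.2
  choose gi gf gsm gfac using hsel
  set G₀ : {c : ℝ → DLM M φ // SmoothCurveDLM E M φ c} → Quot (DirLimRel τ) :=
    fun c => Quot.mk (DirLimRel τ)
      ⟨gi c, ⟨gf c 0, mfderiv 𝓘(ℝ, ℝ) (𝓘(ℝ, E (gi c))) (gf c) 0 (1 : ℝ)⟩⟩ with hG₀
  have lemC : ∀ (c : {c : ℝ → DLM M φ // SmoothCurveDLM E M φ c}) i (g : ℝ → M i)
      (hg : ContMDiff 𝓘(ℝ, ℝ) (𝓘(ℝ, E i)) (⊤ : ℕ∞) g) (hf : c.1 = fun t => DLM.ι M φ i (g t)),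
      G₀ c = Quot.mk (DirLimRel τ)
        ⟨i, ⟨g 0, mfderiv 𝓘(ℝ, ℝ) (𝓘(ℝ, E i)) g 0 (1 : ℝ)⟩⟩ := by
    intro c i g hg hf
    exact tangent_wd (gi c) i (gf c) g (gsm c) hg ((gfac c).symm.trans hf)
  have Gsound : ∀ c c', KinRel E M φ c c' → G₀ c = G₀ c' := by
    intro c c' hk
    obtain ⟨k, g, g', hg, hg', hc, hc', h0, h1⟩ := hk
    rw [lemC c k g hg hc, lemC c' k g' hg' hc']
    exact congrArg (Quot.mk (DirLimRel τ) ∘ (Sigma.mk k)) (tb_mk_eq h0 _ _ (heq_of_eq h1))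
  refine ⟨⟨Quot.lift F₀ Fsound, Quot.lift G₀ Gsound, ?_, ?_⟩, ?_⟩
  · -- left inverse
    apply Quot.ind
    rintro ⟨i, vp⟩
    show G₀ _ = Quot.mk (DirLimRel τ) ⟨i, vp⟩
    rw [lemC _ i (cv i vp) (hcv1 i vp) rfl]
    exact congrArg (Quot.mk (DirLimRel τ) ∘ (Sigma.mk i))
      (tb_mk_eq (hcv2 i vp) _ _ (heq_of_eq (hcv3 i vp)))
  · -- right inverse
    apply Quot.ind
    intro c
    show F₀ _ = Quot.mk (KinRel E M φ) c
    rw [hF₀]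
    have hc : Quot.mk (KinRel E M φ) c = Quot.mk (KinRel E M φ)
        ⟨fun t => DLM.ι M φ (gi c) (gf c t), ⟨gi c, gf c, gsm c, rfl⟩⟩ := by
      apply congrArg (Quot.mk (KinRel E M φ))
      exact Subtype.ext (gfac c)
    rw [hc]
    exact lemB (gi c) (cv (gi c) _) (gf c) (hcv1 _ _) (gsm c) (hcv2 _ _) (hcv3 _ _) _ _
  · -- the computation rule
    intro i g hg
    show F₀ _ = _
    rw [hF₀]
    exact lemB i (cv i _) g (hcv1 _ _) hg (hcv2 _ _) (hcv3 _ _) _ _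
end
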